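/- Equivalence of the team formation problem with the continuous problem: Assume assoc_S(A) > 0 for every nonempty A ⊆ V', let A_0 ⊆ V' be feasible, let θ > 0 satisfy pen(A) ≥ θ for every nonempty infeasible A ⊆ V', and let γ > (vol_d(V)/θ)·(vol_g(A_0) + ν_S)/assoc_S(A_0), where vol_d(V) = ∑_{i∈V} d(i). Define R(A) = vol_g(A) + ν_S·unit(A) + γ·pen(A). Then max over feasible A ⊆ V' of assoc_S(A)/(vol_g(A) + ν_S) equals the reciprocal of inf over f : V' → ℝ, f ≥ 0, f ≠ 0 of R^L(f)/assoc_S^L(f); moreover, if f* attains this infimum, then any threshold set A_i(f*) = {j : f*(j) ≥ f*(i)} minimizing R(A_i(f*))/assoc_S(A_i(f*)) is a feasible set maximizing assoc_S(A)/(vol_g(A) + ν_S). -/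

import Mathlib

open Finset

/-- `Vp S` is the set of experts `V' = V \ S`, as a subtype. -/
abbrev Vp {V : Type*} [Fintype V] [DecidableEq V] (S : Finset V) := {x : V // x ∉ S}

/-- The Lovász extension of a set function `T` (with `T ∅ = 0`): choosing an enumeration
`σ(1), …, σ(m)` of the ground set with `f ∘ σ` nondecreasing (here produced by `Tuple.sort`),
`T^L(f) = ∑_{i=1}^{m−1} T({σ(i+1),…,σ(m)})·(f(σ(i+1)) − f(σ(i))) + T(V')·f(σ(1))`. -/
noncomputable def lovasz {α : Type*} [Fintype α] [DecidableEq α]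
    (T : Finset α → ℝ) (f : α → ℝ) : ℝ :=
  let m := Fintype.card α
  let e : Fin m ≃ α := (Fintype.equivFin α).symm
  let σ : Fin m → α := fun i => e (Tuple.sort (f ∘ e) i)
  (∑ i : Fin m, if h : (i : ℕ) + 1 < m then
      T ((Finset.Ici (⟨(i : ℕ) + 1, h⟩ : Fin m)).image σ) * (f (σ ⟨(i : ℕ) + 1, h⟩) - f (σ i))
    else 0)
  + T Finset.univ * (if h : 0 < m then f (σ ⟨0, h⟩) else 0)

/-- The threshold set `A_i(f) = {j ∈ V' : f(j) ≥ f(i)}`. -/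
noncomputable def thresholdSet {α : Type*} [Fintype α] [DecidableEq α]
    (f : α → ℝ) (i : α) : Finset α :=
  Finset.univ.filter (fun j => f i ≤ f j)

lemma thresholdSet_nonempty {α : Type*} [Fintype α] [DecidableEq α] (f : α → ℝ) (i : α) :
    (thresholdSet f i).Nonempty := ⟨i, by simp [thresholdSet]⟩

lemma tele_sum (G : ℕ → ℝ) (n : ℕ) (hn : 0 < n) :
    (∑ j ∈ Finset.range n, if j + 1 < n then G (j+1) - G j else G 0) = G (n-1) := by
  obtain ⟨m', rfl⟩ : ∃ m', n = m' + 1 := ⟨n - 1, by omega⟩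
  rw [Finset.sum_range_succ,
    Finset.sum_congr rfl (fun j hj => if_pos (by rw [mem_range] at hj; omega)),
    Finset.sum_range_sub G m', if_neg (by omega), Nat.add_sub_cancel]
  ring

lemma lovasz_decomp {α : Type*} [Fintype α] [DecidableEq α] [Nonempty α]
    (f : α → ℝ) (hf : ∀ i, 0 ≤ f i) :
    ∃ (c : Fin (Fintype.card α) → ℝ) (idx : Fin (Fintype.card α) → α) (i0 : α),
      (∀ j, 0 ≤ c j) ∧ (∀ j, c j ≠ 0 → 0 < f (idx j)) ∧
      (∀ i, f i ≤ f i0) ∧ (∑ j, c j = f i0) ∧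
      (∀ T : Finset α → ℝ, lovasz T f = ∑ j, c j * T (thresholdSet f (idx j))) := by
  classical
  have hm : 0 < Fintype.card α := Fintype.card_pos
  set e : Fin (Fintype.card α) ≃ α := (Fintype.equivFin α).symm with he
  set σ : Fin (Fintype.card α) → α := fun i => e (Tuple.sort (f ∘ e) i) with hσ
  have hmono : Monotone (fun i => f (σ i)) := Tuple.monotone_sort (f ∘ e)
  have hmono' : ∀ {a b : Fin (Fintype.card α)}, a ≤ b → f (σ a) ≤ f (σ b) :=
    fun hab => hmono hab
  have hsurj : Function.Surjective σ := by
    intro a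
    exact ⟨(Tuple.sort (f ∘ e)).symm (e.symm a), by simp [hσ]⟩
  have hlov : ∀ T : Finset α → ℝ, lovasz T f =
      (∑ i : Fin (Fintype.card α), if h : (i : ℕ) + 1 < Fintype.card α then
        T ((Finset.Ici (⟨(i : ℕ) + 1, h⟩ : Fin (Fintype.card α))).image σ)
          * (f (σ ⟨(i : ℕ) + 1, h⟩) - f (σ i))
      else 0)
    + T Finset.univ * (if h : 0 < Fintype.card α then f (σ ⟨0, h⟩) else 0) := fun T => rfl
  have hle_succ : ∀ (j : Fin (Fintype.card α)) (h : (j : ℕ) + 1 < Fintype.card α),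
      j ≤ ⟨(j:ℕ)+1, h⟩ := by
    intro j h
    rw [Fin.le_def]
    exact Nat.le_succ _
  have hthr0 : thresholdSet f (σ ⟨0, hm⟩) = univ := by
    ext v
    simp only [thresholdSet, mem_filter, mem_univ, true_and, iff_true]
    obtain ⟨k, rfl⟩ := hsurj v
    exact hmono' (by rw [Fin.le_def]; exact Nat.zero_le _)
  have hjump : ∀ (i : Fin (Fintype.card α)) (h : (i : ℕ) + 1 < Fintype.card α),
      f (σ i) < f (σ ⟨(i : ℕ) + 1, h⟩) →
      (Finset.Ici (⟨(i : ℕ) + 1, h⟩ : Fin (Fintype.card α))).image σ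
        = thresholdSet f (σ ⟨(i : ℕ) + 1, h⟩) := by
    intro i h hlt
    ext v
    simp only [thresholdSet, mem_filter, mem_univ, true_and, mem_image, mem_Ici]
    constructor
    · rintro ⟨k, hk, rfl⟩
      exact hmono' hk
    · intro hv
      obtain ⟨k, rfl⟩ := hsurj v
      refine ⟨k, ?_, rfl⟩
      by_contra hk
      have hk' : k ≤ i := by
        rw [Fin.le_def] at hk ⊢
        simp only [not_le] at hk
        omega
      have h2 : f (σ k) ≤ f (σ i) := hmono' hk'
      exact absurd (hv.trans h2) (not_le.2 hlt)
  refine ⟨fun j => if h : (j : ℕ) + 1 < Fintype.card α then f (σ ⟨(j:ℕ)+1, h⟩) - f (σ j)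
            else f (σ ⟨0, hm⟩),
          fun j => if h : (j : ℕ) + 1 < Fintype.card α then σ ⟨(j:ℕ)+1, h⟩ else σ ⟨0, hm⟩,
          σ ⟨Fintype.card α - 1, by omega⟩, ?_, ?_, ?_, ?_, ?_⟩
  · intro j
    dsimp only
    by_cases h : (j : ℕ) + 1 < Fintype.card α
    · rw [dif_pos h]
      exact sub_nonneg.2 (hmono' (hle_succ j h))
    · rw [dif_neg h]
      exact hf _
  · intro j
    dsimp only
    by_cases h : (j : ℕ) + 1 < Fintype.card α
    · simp only [dif_pos h]
      intro hne
      have hle : f (σ j) ≤ f (σ ⟨(j:ℕ)+1, h⟩) := hmono' (hle_succ j h)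
      exact lt_of_le_of_lt (hf _)
        (lt_of_le_of_ne hle (fun heq => hne (by rw [heq, sub_self])))
    · simp only [dif_neg h]
      intro hne
      exact lt_of_le_of_ne (hf _) (Ne.symm hne)
  · intro i
    obtain ⟨k, rfl⟩ := hsurj i
    refine hmono' ?_
    rw [Fin.le_def]
    show (k : ℕ) ≤ Fintype.card α - 1
    have := k.isLt
    omega
  · -- telescoping
    set F : ℕ → ℝ := fun n => if h : n < Fintype.card α then f (σ ⟨n, h⟩) else 0 with hF
    have hFval : ∀ (n : ℕ) (h : n < Fintype.card α), F n = f (σ ⟨n, h⟩) := by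
      intro n h; simp [hF, h]
    have hFval' : ∀ j : Fin (Fintype.card α), F (j : ℕ) = f (σ j) := by
      intro j; simp [hF, j.isLt]
    have key : ∀ j : Fin (Fintype.card α),
        (if h : (j : ℕ) + 1 < Fintype.card α then f (σ ⟨(j:ℕ)+1, h⟩) - f (σ j)
          else f (σ ⟨0, hm⟩))
        = (fun n => if n + 1 < Fintype.card α then F (n+1) - F n else F 0) (j : ℕ) := by
      intro j
      by_cases h : (j : ℕ) + 1 < Fintype.card α
      · simp only [dif_pos h, if_pos h]
        rw [hFval _ h, hFval' j]
      · simp only [dif_neg h, if_neg h]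
        rw [hFval 0 hm]
    rw [Finset.sum_congr rfl fun j _ => key j,
      Fin.sum_univ_eq_sum_range (fun n => if n + 1 < Fintype.card α then F (n+1) - F n else F 0)
        (Fintype.card α),
      tele_sum F _ hm, hFval _ (by omega)]
  · intro T
    rw [hlov T]
    have hsum2 : ∀ j : Fin (Fintype.card α),
        (if h : (j : ℕ) + 1 < Fintype.card α then f (σ ⟨(j:ℕ)+1, h⟩) - f (σ j)
          else f (σ ⟨0, hm⟩))
        * T (thresholdSet f (if h : (j : ℕ) + 1 < Fintype.card α then σ ⟨(j:ℕ)+1, h⟩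
            else σ ⟨0, hm⟩))
        = (if h : (j : ℕ) + 1 < Fintype.card α then
            T ((Finset.Ici (⟨(j : ℕ) + 1, h⟩ : Fin (Fintype.card α))).image σ)
              * (f (σ ⟨(j : ℕ) + 1, h⟩) - f (σ j))
          else 0)
          + (if (j : ℕ) + 1 < Fintype.card α then 0
             else T Finset.univ * f (σ ⟨0, hm⟩)) := by
      intro j
      by_cases h : (j : ℕ) + 1 < Fintype.card α
      · simp only [dif_pos h, if_pos h, add_zero]
        have hle : f (σ j) ≤ f (σ ⟨(j:ℕ)+1, h⟩) := hmono' (hle_succ j h)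
        rcases eq_or_lt_of_le hle with heq | hlt
        · rw [← heq]; ring
        · rw [hjump j h hlt]; ring
      · simp only [dif_neg h, if_neg h, hthr0]
        ring
    rw [Finset.sum_congr rfl fun j _ => hsum2 j, Finset.sum_add_distrib]
    congr 1
    rw [dif_pos hm]
    symm
    rw [Finset.sum_eq_single (⟨Fintype.card α - 1, by omega⟩ : Fin (Fintype.card α))]
    · rw [if_neg (by show ¬ (Fintype.card α - 1 + 1 < Fintype.card α); omega)]
    · intro j _ hj
      have hne : (j : ℕ) ≠ Fintype.card α - 1 := by
        intro hc
        exact hj (Fin.ext (by rw [hc]))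
      have hlt : (j : ℕ) + 1 < Fintype.card α := by
        have := j.isLt; omega
      rw [if_pos hlt]
    · intro hmem
      exact absurd (mem_univ _) hmem

lemma lovasz_indicator {α : Type*} [Fintype α] [DecidableEq α] [Nonempty α]
    (T : Finset α → ℝ) (A : Finset α) (hA : A.Nonempty) :
    lovasz T (fun v => if v ∈ A then (1:ℝ) else 0) = T A := by
  classical
  set f : α → ℝ := fun v => if v ∈ A then (1:ℝ) else 0 with hf
  have hf01 : ∀ v, f v = 0 ∨ f v = 1 := by
    intro v; by_cases h : v ∈ A
    · right; simp [hf, h]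
    · left; simp [hf, h]
  have hfnn : ∀ v, 0 ≤ f v := by
    intro v; rcases hf01 v with h | h <;> rw [h] <;> norm_num
  have hfle : ∀ v, f v ≤ 1 := by
    intro v; rcases hf01 v with h | h <;> rw [h] <;> norm_num
  have hmem1 : ∀ v, f v = 1 → v ∈ A := by
    intro v h
    by_contra hc
    rw [hf] at h
    simp only [if_neg hc] at h
    norm_num at h
  obtain ⟨c, idx, i0, h1, h2, h3, h4, h5⟩ := lovasz_decomp f hfnn
  rw [h5 T]
  have hterm : ∀ j, c j * T (thresholdSet f (idx j)) = c j * T A := by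
    intro j
    rcases eq_or_ne (c j) 0 with h | h
    · rw [h, zero_mul, zero_mul]
    · have hpos := h2 j h
      have hidx1 : f (idx j) = 1 := by
        rcases hf01 (idx j) with h0 | h0
        · rw [h0] at hpos; norm_num at hpos
        · exact h0
      have hthr : thresholdSet f (idx j) = A := by
        ext v
        simp only [thresholdSet, Finset.mem_filter, Finset.mem_univ, true_and]
        rw [hidx1]
        constructor
        · intro hv
          rcases hf01 v with h0 | h0
          · rw [h0] at hv; norm_num at hv
          · exact hmem1 v h0
        · intro hv
          rw [hf]; simp [hv]
      rw [hthr]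
  rw [Finset.sum_congr rfl fun j _ => hterm j, ← Finset.sum_mul, h4]
  have hone : f i0 = 1 := by
    obtain ⟨a, ha⟩ := hA
    have ha1 : f a = 1 := by rw [hf]; simp [ha]
    have := h3 a
    rw [ha1] at this
    have := hfle i0
    linarith
  rw [hone, one_mul]

/-- **Equivalence of the team formation problem with the continuous problem.** For `γ` above
the exact-penalty threshold and `R(A) = vol_g(A) + ν_S·unit(A) + γ·pen(A)`, the maximum of
`assoc_S(A)/(vol_g(A) + ν_S)` over feasible `A` equals the reciprocal of the infimum of
`R^L(f)/assoc_S^L(f)` over `f ≥ 0`, `f ≠ 0`; and optimal thresholding of a minimizer `f*`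
yields a feasible set maximizing `assoc_S(A)/(vol_g(A) + ν_S)`. -/
theorem team_formation_continuous_equivalence
    {V : Type*} [Fintype V] [DecidableEq V] (hV : Nonempty V)
    (w : V → V → ℝ) (hw_symm : ∀ i j, w i j = w j i) (hw_nonneg : ∀ i j, 0 ≤ w i j)
    (g : V → ℝ) (hg : ∀ i, 0 < g i)
    (S : Finset V) (hVp : Nonempty (Vp S))
    (p : ℕ) (hp : 1 ≤ p)
    (M : Fin p → Vp S → ℝ) (hM : ∀ j i, 0 ≤ M j i) (k l : Fin p → ℝ)
    (dist : Vp S → Vp S → ℝ) (hdist_symm : ∀ u v, dist u v = dist v u)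
    (hdist_nonneg : ∀ u v, 0 ≤ dist u v) (d0 : ℝ) (hd0 : 0 ≤ d0)
    -- the degree function d, the restricted degrees d^S, and the constants μ_S, ν_S
    (deg : V → ℝ) (hdeg : deg = fun i => ∑ j, w i j)
    (degS : Vp S → ℝ) (hdegS : degS = fun i => ∑ j ∈ S, w i.1 j)
    (muS nuS : ℝ) (hmuS : muS = ∑ i ∈ S, ∑ j ∈ S, w i j) (hnuS : nuS = ∑ i ∈ S, g i)
    -- assoc_S(A) = vol_d(A) − cut(A, V'∖A) + vol_{d^S}(A) + μ_S·unit(A)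
    (assocS : Finset (Vp S) → ℝ)
    (hassocS : assocS = fun A => (∑ i ∈ A, deg i.1) - (∑ i ∈ A, ∑ j ∈ Aᶜ, w i.1 j.1)
        + (∑ i ∈ A, degS i) + muS * (if A = ∅ then 0 else 1))
    -- the penalty function
    (pen : Finset (Vp S) → ℝ)
    (hpen : pen = fun A => if A = ∅ then 0 else
        (∑ j, max 0 ((∑ i ∈ A, M j i) - l j)) + (∑ j, max 0 (k j - ∑ i ∈ A, M j i))
        + ∑ u ∈ A, ∑ v ∈ A, max 0 (dist u v - d0))
    -- feasibility
    (Feasible : Finset (Vp S) → Prop)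
    (hFeas : Feasible = fun A => A.Nonempty
        ∧ (∀ j, k j ≤ (∑ i ∈ A, M j i) ∧ (∑ i ∈ A, M j i) ≤ l j)
        ∧ ∀ u ∈ A, ∀ v ∈ A, dist u v ≤ d0)
    -- assumptions of the theorem
    (hassoc_pos : ∀ A : Finset (Vp S), A.Nonempty → 0 < assocS A)
    (A0 : Finset (Vp S)) (hA0 : Feasible A0)
    (θ : ℝ) (hθ : 0 < θ)
    (hθpen : ∀ A : Finset (Vp S), A.Nonempty → ¬ Feasible A → θ ≤ pen A)
    (γ : ℝ)
    (hγ : ((∑ i, deg i) / θ) * (((∑ i ∈ A0, g i.1) + nuS) / assocS A0) < γ)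
    -- R(A) = vol_g(A) + ν_S·unit(A) + γ·pen(A)
    (R : Finset (Vp S) → ℝ)
    (hR : R = fun A => (∑ i ∈ A, g i.1) + nuS * (if A = ∅ then 0 else 1) + γ * pen A) :
    -- 1) max over feasible sets of the density = reciprocal of the continuous infimum
    sSup {x : ℝ | ∃ A : Finset (Vp S), Feasible A ∧
          x = assocS A / ((∑ i ∈ A, g i.1) + nuS)}
      = (sInf {x : ℝ | ∃ f : Vp S → ℝ, (∀ i, 0 ≤ f i) ∧ f ≠ 0 ∧
          x = lovasz R f / lovasz assocS f})⁻¹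
    -- 2) optimal thresholding of a continuous minimizer yields a feasible maximizer
    ∧ ∀ f : Vp S → ℝ, (∀ i, 0 ≤ f i) → f ≠ 0 →
        lovasz R f / lovasz assocS f
          = sInf {x : ℝ | ∃ f' : Vp S → ℝ, (∀ i, 0 ≤ f' i) ∧ f' ≠ 0 ∧
              x = lovasz R f' / lovasz assocS f'} →
        ∀ i : Vp S,
          (∀ i' : Vp S, R (thresholdSet f i) / assocS (thresholdSet f i)
              ≤ R (thresholdSet f i') / assocS (thresholdSet f i')) →
          Feasible (thresholdSet f i)
          ∧ ∀ B : Finset (Vp S), Feasible B →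
              assocS B / ((∑ i ∈ B, g i.1) + nuS)
                ≤ assocS (thresholdSet f i) / ((∑ j ∈ thresholdSet f i, g j.1) + nuS) := by
  classical
  haveI : Nonempty (Vp S) := hVp
  -- basic nonnegativity facts
  have hdeg_nn : ∀ i : V, 0 ≤ deg i := by
    intro i; rw [hdeg]; exact Finset.sum_nonneg fun j _ => hw_nonneg i j
  have hdegS_nn : ∀ i : Vp S, 0 ≤ degS i := by
    intro i; rw [hdegS]; exact Finset.sum_nonneg fun j _ => hw_nonneg _ _
  have hmuS_nn : 0 ≤ muS := by
    rw [hmuS]; exact Finset.sum_nonneg fun i _ => Finset.sum_nonneg fun j _ => hw_nonneg _ _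
  have hnuS_nn : 0 ≤ nuS := by
    rw [hnuS]; exact Finset.sum_nonneg fun i _ => (hg i).le
  have hWnn : 0 ≤ ∑ i, deg i := Finset.sum_nonneg fun i _ => hdeg_nn i
  have hvol_pos : ∀ A : Finset (Vp S), A.Nonempty → 0 < (∑ i ∈ A, g i.1) + nuS :=
    fun A hA => add_pos_of_pos_of_nonneg (Finset.sum_pos (fun i _ => hg i.1) hA) hnuS_nn
  have hvolg_nn : ∀ A : Finset (Vp S), 0 ≤ ∑ i ∈ A, g i.1 :=
    fun A => Finset.sum_nonneg fun i _ => (hg i.1).le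
  have hFne : ∀ A : Finset (Vp S), Feasible A → A.Nonempty := by
    intro A hA; rw [hFeas] at hA; exact hA.1
  have hA0ne : A0.Nonempty := hFne A0 hA0
  have hpen_nn : ∀ A : Finset (Vp S), 0 ≤ pen A := by
    intro A
    rw [hpen]
    dsimp only
    split
    · exact le_refl 0
    · refine add_nonneg (add_nonneg ?_ ?_) ?_
      · exact Finset.sum_nonneg fun j _ => le_max_left 0 _
      · exact Finset.sum_nonneg fun j _ => le_max_left 0 _
      · exact Finset.sum_nonneg fun u _ => Finset.sum_nonneg fun v _ => le_max_left 0 _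
  have hγpos : 0 < γ := by
    refine lt_of_le_of_lt ?_ hγ
    exact mul_nonneg (div_nonneg hWnn hθ.le)
      (div_nonneg (hvol_pos A0 hA0ne).le (hassoc_pos A0 hA0ne).le)
  -- R on feasible sets
  have hRfeas : ∀ A : Finset (Vp S), Feasible A → R A = (∑ i ∈ A, g i.1) + nuS := by
    intro A hA
    have hAne : A.Nonempty := hFne A hA
    have hp0 : pen A = 0 := by
      rw [hpen]
      dsimp only
      rw [if_neg (Finset.nonempty_iff_ne_empty.1 hAne)]
      rw [hFeas] at hA
      obtain ⟨-, hb, hd⟩ := hA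
      have e1 : ∀ j : Fin p, max 0 ((∑ i ∈ A, M j i) - l j) = 0 := fun j =>
        max_eq_left (sub_nonpos.2 (hb j).2)
      have e2 : ∀ j : Fin p, max 0 (k j - ∑ i ∈ A, M j i) = 0 := fun j =>
        max_eq_left (sub_nonpos.2 (hb j).1)
      have e3 : ∀ u ∈ A, ∀ v ∈ A, max 0 (dist u v - d0) = 0 := fun u hu v hv =>
        max_eq_left (sub_nonpos.2 (hd u hu v hv))
      rw [Finset.sum_congr rfl fun j _ => e1 j, Finset.sum_congr rfl fun j _ => e2 j,
        Finset.sum_congr rfl (fun u hu => Finset.sum_congr rfl fun v hv => e3 u hu v hv)]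
      simp
    rw [hR]
    dsimp only
    rw [hp0, if_neg (Finset.nonempty_iff_ne_empty.1 hAne)]
    ring
  -- the combinatorial bound  assocS A ≤ vol_d(V)
  have hW : ∀ A : Finset (Vp S), assocS A ≤ ∑ i, deg i := by
    intro A
    have hsubty : ∀ F : V → ℝ, ∑ i ∈ Sᶜ, F i = ∑ i : Vp S, F i.1 := by
      intro F
      exact Finset.sum_subtype Sᶜ (fun x => Finset.mem_compl) F
    have hsplit : ∑ i ∈ Sᶜ, deg i + ∑ i ∈ S, deg i = ∑ i, deg i :=
      Finset.sum_compl_add_sum S deg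
    have hcut_nn : 0 ≤ ∑ i ∈ A, ∑ j ∈ Aᶜ, w i.1 j.1 :=
      Finset.sum_nonneg fun i _ => Finset.sum_nonneg fun j _ => hw_nonneg _ _
    have h1 : ∑ i ∈ A, deg i.1 ≤ ∑ i ∈ Sᶜ, deg i := by
      rw [hsubty]
      exact Finset.sum_le_sum_of_subset_of_nonneg (Finset.subset_univ A)
        (fun i _ _ => hdeg_nn i.1)
    have h2c : (∑ i : Vp S, degS i) + muS = ∑ i ∈ S, deg i := by
      have e1 : ∑ i : Vp S, degS i = ∑ i ∈ Sᶜ, ∑ j ∈ S, w i j := by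
        rw [hdegS, hsubty (fun x => ∑ j ∈ S, w x j)]
      rw [e1, hmuS, hdeg, Finset.sum_comm, ← Finset.sum_add_distrib]
      refine Finset.sum_congr rfl fun i hi => ?_
      rw [Finset.sum_congr rfl (fun j (_ : j ∈ Sᶜ) => hw_symm j i)]
      exact Finset.sum_compl_add_sum S (w i)
    have h2 : (∑ i ∈ A, degS i) + muS * (if A = ∅ then 0 else 1) ≤ ∑ i ∈ S, deg i := by
      have h2a : ∑ i ∈ A, degS i ≤ ∑ i : Vp S, degS i :=
        Finset.sum_le_sum_of_subset_of_nonneg (Finset.subset_univ A)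
          (fun i _ _ => hdegS_nn i)
      have h2b : muS * (if A = ∅ then 0 else 1) ≤ muS := by
        split
        · simpa using hmuS_nn
        · simp
      linarith
    rw [hassocS]
    dsimp only
    linarith
  -- the best feasible set
  obtain ⟨Astar, hAstar_mem, hAstar_max⟩ := Finset.exists_max_image
    (Finset.univ.filter Feasible) (fun A => assocS A / ((∑ i ∈ A, g i.1) + nuS))
    ⟨A0, by simp [hA0]⟩
  have hAstar : Feasible Astar := (Finset.mem_filter.1 hAstar_mem).2
  have hmax : ∀ A : Finset (Vp S), Feasible A →
      assocS A / ((∑ i ∈ A, g i.1) + nuS)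
        ≤ assocS Astar / ((∑ i ∈ Astar, g i.1) + nuS) :=
    fun A hA => hAstar_max A (by simp [hA])
  have hAstar_ne : Astar.Nonempty := hFne Astar hAstar
  set ρ : ℝ := ((∑ i ∈ Astar, g i.1) + nuS) / assocS Astar with hρdef
  -- key exact penalty bounds
  have key_feas : ∀ A : Finset (Vp S), Feasible A → ρ * assocS A ≤ R A := by
    intro A hA
    have hAne : A.Nonempty := hFne A hA
    rw [hRfeas A hA]
    have h := hmax A hA
    rw [div_le_div_iff₀ (hvol_pos A hAne) (hvol_pos Astar hAstar_ne)] at h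
    rw [hρdef, div_mul_eq_mul_div, div_le_iff₀ (hassoc_pos Astar hAstar_ne)]
    nlinarith [h]
  have key_infeas : ∀ A : Finset (Vp S), A.Nonempty → ¬ Feasible A →
      ρ * assocS A < R A := by
    intro A hAne hAinf
    have hWA := hW A
    have hρ0 : 0 ≤ ρ := div_nonneg (hvol_pos Astar hAstar_ne).le (hassoc_pos _ hAstar_ne).le
    have step1 : ρ * assocS A ≤ ρ * (∑ i, deg i) := mul_le_mul_of_nonneg_left hWA hρ0
    have hρ2 : ρ ≤ ((∑ i ∈ A0, g i.1) + nuS) / assocS A0 := by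
      have h := hmax A0 hA0
      rw [div_le_div_iff₀ (hvol_pos A0 hA0ne) (hvol_pos Astar hAstar_ne)] at h
      rw [hρdef, div_le_div_iff₀ (hassoc_pos _ hAstar_ne) (hassoc_pos _ hA0ne)]
      nlinarith [h]
    have step2 : ρ * (∑ i, deg i) ≤ (((∑ i ∈ A0, g i.1) + nuS) / assocS A0) * (∑ i, deg i) :=
      mul_le_mul_of_nonneg_right hρ2 hWnn
    have step3 : (((∑ i ∈ A0, g i.1) + nuS) / assocS A0) * (∑ i, deg i) < γ * θ := by
      have e : (((∑ i ∈ A0, g i.1) + nuS) / assocS A0) * (∑ i, deg i)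
          = (((∑ i, deg i) / θ) * (((∑ i ∈ A0, g i.1) + nuS) / assocS A0)) * θ := by
        have hθ' : θ ≠ 0 := ne_of_gt hθ
        have ha0' : assocS A0 ≠ 0 := ne_of_gt (hassoc_pos A0 hA0ne)
        field_simp
      rw [e]
      exact mul_lt_mul_of_pos_right hγ hθ
    have step4 : γ * θ ≤ γ * pen A := mul_le_mul_of_nonneg_left (hθpen A hAne hAinf) hγpos.le
    have step5 : γ * pen A ≤ R A := by
      rw [hR]
      dsimp only
      rw [if_neg (Finset.nonempty_iff_ne_empty.1 hAne)]
      have := hvolg_nn A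
      linarith
    linarith
  have keyall : ∀ B : Finset (Vp S), B.Nonempty → ρ * assocS B ≤ R B := by
    intro B hB
    by_cases hfe : Feasible B
    · exact key_feas B hfe
    · exact (key_infeas B hB hfe).le
  -- positivity of the denominator Lovász extension
  have cont_pos : ∀ f : Vp S → ℝ, (∀ i, 0 ≤ f i) → f ≠ 0 → 0 < lovasz assocS f := by
    intro f hfp hfn
    obtain ⟨c, idx, i0, h1, h2, h3, h4, h5⟩ := lovasz_decomp f hfp
    rw [h5 assocS]
    have hex : ∃ j, c j ≠ 0 := by
      by_contra hc
      push_neg at hc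
      obtain ⟨v, hv⟩ := Function.ne_iff.1 hfn
      have hv' : f v ≠ 0 := hv
      have h0 : f i0 = 0 := by rw [← h4]; exact Finset.sum_eq_zero fun j _ => hc j
      have h3v := h3 v
      have : 0 < f v := lt_of_le_of_ne (hfp v) (Ne.symm hv')
      rw [h0] at h3v
      linarith
    obtain ⟨j0, hj0⟩ := hex
    refine Finset.sum_pos' (fun j _ => mul_nonneg (h1 j)
      (hassoc_pos _ (thresholdSet_nonempty f (idx j))).le) ⟨j0, Finset.mem_univ j0, ?_⟩
    exact mul_pos (lt_of_le_of_ne (h1 j0) (Ne.symm hj0))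
      (hassoc_pos _ (thresholdSet_nonempty f (idx j0)))
  -- the general comparison bound
  have cont_bound : ∀ (f : Vp S → ℝ), (∀ i, 0 ≤ f i) → ∀ r : ℝ,
      (∀ i' : Vp S, r * assocS (thresholdSet f i') ≤ R (thresholdSet f i')) →
      r * lovasz assocS f ≤ lovasz R f := by
    intro f hfp r hr
    obtain ⟨c, idx, i0, h1, h2, h3, h4, h5⟩ := lovasz_decomp f hfp
    rw [h5 assocS, h5 R, Finset.mul_sum]
    refine Finset.sum_le_sum fun j _ => ?_
    have h := mul_le_mul_of_nonneg_left (hr (idx j)) (h1 j)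
    calc r * (c j * assocS (thresholdSet f (idx j)))
        = c j * (r * assocS (thresholdSet f (idx j))) := by ring
      _ ≤ c j * R (thresholdSet f (idx j)) := h
  -- ρ is a lower bound for the continuous ratios
  have cont_lb : ∀ f : Vp S → ℝ, (∀ i, 0 ≤ f i) → f ≠ 0 →
      ρ ≤ lovasz R f / lovasz assocS f := by
    intro f hfp hfn
    refine (le_div_iff₀ (cont_pos f hfp hfn)).2 ?_
    exact cont_bound f hfp ρ (fun i' => keyall _ (thresholdSet_nonempty f i'))
  -- ρ is attained by the indicator of Astar
  have hmem : ∃ f : Vp S → ℝ, (∀ i, 0 ≤ f i) ∧ f ≠ 0 ∧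
      ρ = lovasz R f / lovasz assocS f := by
    refine ⟨fun v => if v ∈ Astar then (1:ℝ) else 0, fun v => by positivity, ?_, ?_⟩
    · obtain ⟨a, ha⟩ := hAstar_ne
      refine Function.ne_iff.2 ⟨a, ?_⟩
      simp [ha]
    · rw [lovasz_indicator R Astar hAstar_ne, lovasz_indicator assocS Astar hAstar_ne,
        hRfeas Astar hAstar]
  have hleast : IsLeast {x : ℝ | ∃ f : Vp S → ℝ, (∀ i, 0 ≤ f i) ∧ f ≠ 0 ∧
      x = lovasz R f / lovasz assocS f} ρ := by
    constructor
    · exact hmem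
    · rintro x ⟨f, hfp, hfn, rfl⟩
      exact cont_lb f hfp hfn
  have hInfEq : sInf {x : ℝ | ∃ f : Vp S → ℝ, (∀ i, 0 ≤ f i) ∧ f ≠ 0 ∧
      x = lovasz R f / lovasz assocS f} = ρ := hleast.csInf_eq
  have hgreat : IsGreatest {x : ℝ | ∃ A : Finset (Vp S), Feasible A ∧
      x = assocS A / ((∑ i ∈ A, g i.1) + nuS)}
      (assocS Astar / ((∑ i ∈ Astar, g i.1) + nuS)) := by
    constructor
    · exact ⟨Astar, hAstar, rfl⟩
    · rintro x ⟨A, hA, rfl⟩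
      exact hmax A hA
  constructor
  · rw [hgreat.csSup_eq, hInfEq, hρdef, inv_div]
  · intro f hfp hfn hfeq i hmin
    have hpos := cont_pos f hfp hfn
    have hBne := thresholdSet_nonempty f i
    have hthr_pos : ∀ i' : Vp S, 0 < assocS (thresholdSet f i') :=
      fun i' => hassoc_pos _ (thresholdSet_nonempty f i')
    have hr : R (thresholdSet f i) / assocS (thresholdSet f i) ≤ ρ := by
      have hb := cont_bound f hfp (R (thresholdSet f i) / assocS (thresholdSet f i))
        (fun i' => by
          have h := hmin i'
          rw [div_le_div_iff₀ (hthr_pos i) (hthr_pos i')] at h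
          rw [div_mul_eq_mul_div, div_le_iff₀ (hthr_pos i)]
          nlinarith [h])
      have h2 : R (thresholdSet f i) / assocS (thresholdSet f i)
          ≤ lovasz R f / lovasz assocS f := (le_div_iff₀ hpos).2 hb
      rw [hfeq, hInfEq] at h2
      exact h2
    have hfeasB : Feasible (thresholdSet f i) := by
      by_contra hc
      have hlt := key_infeas _ hBne hc
      rw [div_le_iff₀ (hthr_pos i)] at hr
      nlinarith [hlt, hr]
    refine ⟨hfeasB, ?_⟩
    intro B hB
    have h1 := hmax B hB
    have h2 : assocS Astar / ((∑ i ∈ Astar, g i.1) + nuS)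
        ≤ assocS (thresholdSet f i) / ((∑ j ∈ thresholdSet f i, g j.1) + nuS) := by
      have hRB := hRfeas _ hfeasB
      rw [hRB, hρdef, div_le_div_iff₀ (hassoc_pos _ hBne) (hassoc_pos _ hAstar_ne)] at hr
      rw [div_le_div_iff₀ (hvol_pos _ hAstar_ne) (hvol_pos _ hBne)]
      nlinarith [hr]
    exact le_trans h1 h2
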